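/- Let V′ be a finite set and for each v ∈ V′ let L′(v) be a nonempty finite set of colors. If there is no injective function f defined on V′ with f(v) ∈ L′(v) for every v ∈ V′, then there exists a subset X ⊆ V′ with ∑_{v ∈ X} 1/|L′(v)| > 1; in particular ∑_{v ∈ V′} 1/|L′(v)| > 1. -/
import Mathlib


theorem hall_weight_observation {V α : Type*} [Fintype V] [DecidableEq α]
    (L : V → Finset α) (hL : ∀ v, (L v).Nonempty)
    (h : ¬ ∃ f : V → α, Function.Injective f ∧ ∀ v, f v ∈ L v) :
    (∃ X : Finset V, 1 < ∑ v ∈ X, (1 : ℝ) / (L v).card) ∧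
      1 < ∑ v : V, (1 : ℝ) / (L v).card := by
  rw [← Finset.all_card_le_biUnion_card_iff_exists_injective] at h
  push_neg at h
  obtain ⟨S, hS⟩ := h
  have hSpos : 0 < S.card := lt_of_le_of_lt (Nat.zero_le _) hS
  have hBpos : 0 < (S.biUnion L).card := by
    obtain ⟨v, hv⟩ := Finset.card_pos.mp hSpos
    obtain ⟨a, ha⟩ := hL v
    exact Finset.card_pos.mpr ⟨a, Finset.mem_biUnion.mpr ⟨v, hv, ha⟩⟩
  have key : 1 < ∑ v ∈ S, (1 : ℝ) / (L v).card := by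
    have h1 : ∀ v ∈ S, (1 : ℝ) / (S.biUnion L).card ≤ 1 / (L v).card := by
      intro v hv
      apply one_div_le_one_div_of_le
      · exact_mod_cast Finset.card_pos.mpr (hL v)
      · exact_mod_cast Finset.card_le_card (Finset.subset_biUnion_of_mem L hv)
    calc (1 : ℝ) < S.card / (S.biUnion L).card := by
          rw [lt_div_iff₀ (by exact_mod_cast hBpos)]
          simpa using (by exact_mod_cast hS : ((S.biUnion L).card : ℝ) < S.card)
      _ = ∑ _v ∈ S, (1 : ℝ) / (S.biUnion L).card := by
          rw [Finset.sum_const, nsmul_eq_mul]; ring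
      _ ≤ ∑ v ∈ S, (1 : ℝ) / (L v).card := Finset.sum_le_sum h1
  refine ⟨⟨S, key⟩, lt_of_lt_of_le key ?_⟩
  apply Finset.sum_le_sum_of_subset_of_nonneg (Finset.subset_univ S)
  intro v _ _
  positivity
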